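/- The symmetric linear-core surrogate Φ̄ is a convex function on ℝ. -/

import Mathlib

/-- The symmetric linear-core surrogate `Φ̄` built from a base function `Φ`:
`Φ̄(u) = -u + 1 + Φ(0)/Φ'(0)` for `-1 ≤ u ≤ 1`, `Φ̄(u) = Φ(1-u)/Φ'(0)` for `u > 1`,
and `Φ̄(u) = Φ(-1-u)/Φ'(0) + 2` for `u < -1`. -/
noncomputable def barPhi (Φ : ℝ → ℝ) (u : ℝ) : ℝ :=
  if 1 < u then Φ (1 - u) / deriv Φ 0
  else if u < -1 then Φ (-1 - u) / deriv Φ 0 + 2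
  else -u + 1 + Φ 0 / deriv Φ 0

/-- An affine function is convex on `ℝ`. -/
lemma affine_convexOn_aux (m k : ℝ) : ConvexOn ℝ Set.univ (fun u : ℝ => m * u + k) := by
  refine ⟨convex_univ, ?_⟩
  intro x _ y _ a b ha hb hab
  simp only [smul_eq_mul]
  apply le_of_eq
  linear_combination (-k) * hab

/-- The symmetric linear-core surrogate `Φ̄` is convex on `ℝ`. -/
theorem barPhi_convex (Φ : ℝ → ℝ)
    (hconv : ConvexOn ℝ Set.univ Φ) (hdiff : Differentiable ℝ Φ)
    (hnn : ∀ u, 0 ≤ Φ u) (hd0 : 0 < deriv Φ 0) :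
    ConvexOn ℝ Set.univ (barPhi Φ) := by
  set c := deriv Φ 0 with hc
  have hmono : Monotone (deriv Φ) :=
    monotoneOn_univ.1 (hconv.monotoneOn_deriv (fun x _ => hdiff x))
  set g : ℝ → ℝ := fun t => Φ (-t) / c + t - Φ 0 / c with hg
  set h : ℝ → ℝ := fun t => Φ t / c - t - Φ 0 / c with hh
  -- derivatives of g and h
  have hgd : ∀ t, HasDerivAt g (-deriv Φ (-t) / c + 1) t := by
    intro t
    have h1 : HasDerivAt (fun t : ℝ => Φ (-t)) (deriv Φ (-t) * (-1)) t :=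
      (hdiff (-t)).hasDerivAt.comp t (hasDerivAt_neg t)
    have h2 := ((h1.div_const c).add (hasDerivAt_id t)).sub_const (Φ 0 / c)
    simp only [Pi.add_apply, id_eq] at h2
    exact h2.congr_deriv (by ring)
  have hhd : ∀ t, HasDerivAt h (deriv Φ t / c - 1) t := by
    intro t
    have h2 := (((hdiff t).hasDerivAt.div_const c).sub (hasDerivAt_id t)).sub_const (Φ 0 / c)
    simp only [Pi.sub_apply, id_eq] at h2
    convert h2 using 1
  have hgdiff : Differentiable ℝ g := fun t => (hgd t).differentiableAt
  have hhdiff : Differentiable ℝ h := fun t => (hhd t).differentiableAt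
  -- g, h are convex
  have hnegconv : ConvexOn ℝ Set.univ fun t : ℝ => Φ (-t) := by
    refine ⟨convex_univ, ?_⟩
    intro x _ y _ a b ha hb hab
    have h0 := hconv.2 (Set.mem_univ (-x)) (Set.mem_univ (-y)) ha hb hab
    simp only [smul_eq_mul] at h0 ⊢
    rw [show -(a * x + b * y) = a * (-x) + b * (-y) by ring]
    exact h0
  have hgconv : ConvexOn ℝ Set.univ g := by
    have h1 := hnegconv.smul (c := (1:ℝ)/c) (by positivity)
    have h2 := affine_convexOn_aux 1 (-(Φ 0 / c))
    refine (h1.add h2).congr ?_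
    intro t _
    simp only [Pi.add_apply, smul_eq_mul, hg]
    ring
  have hhconv : ConvexOn ℝ Set.univ h := by
    have h1 := hconv.smul (c := (1:ℝ)/c) (by positivity)
    have h2 := affine_convexOn_aux (-1) (-(Φ 0 / c))
    refine (h1.add h2).congr ?_
    intro t _
    simp only [Pi.add_apply, smul_eq_mul, hh]
    ring
  -- g, h are monotone on [0, ∞)
  have hgmono : MonotoneOn g (Set.Ici (0:ℝ)) := by
    apply monotoneOn_of_deriv_nonneg (convex_Ici 0) hgdiff.continuous.continuousOn
      hgdiff.differentiableOn
    intro x hx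
    rw [interior_Ici] at hx
    rw [(hgd x).deriv]
    have h1 : deriv Φ (-x) ≤ c := hmono (by linarith [Set.mem_Ioi.1 hx])
    have hd : -deriv Φ (-x) / c + 1 = 1 - deriv Φ (-x) / c := by ring
    rw [hd, sub_nonneg, div_le_one hd0]
    exact h1
  have hhmono : MonotoneOn h (Set.Ici (0:ℝ)) := by
    apply monotoneOn_of_deriv_nonneg (convex_Ici 0) hhdiff.continuous.continuousOn
      hhdiff.differentiableOn
    intro x hx
    rw [interior_Ici] at hx
    rw [(hhd x).deriv]
    have h1 : c ≤ deriv Φ x := hmono (le_of_lt (Set.mem_Ioi.1 hx))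
    rw [sub_nonneg, le_div_iff₀ hd0]
    linarith
  -- positive-part maps
  set f₁ : ℝ → ℝ := fun u => max (u - 1) 0 with hf₁
  set f₂ : ℝ → ℝ := fun u => max (-1 - u) 0 with hf₂
  have hf₁conv : ConvexOn ℝ Set.univ f₁ := by
    have := (affine_convexOn_aux 1 (-1)).sup (convexOn_const 0 convex_univ)
    refine this.congr ?_
    intro u _
    simp only [hf₁, Pi.sup_apply]
    rw [show 1 * u + -1 = u - 1 by ring]
  have hf₂conv : ConvexOn ℝ Set.univ f₂ := by
    have := (affine_convexOn_aux (-1) (-1)).sup (convexOn_const 0 convex_univ)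
    refine this.congr ?_
    intro u _
    simp only [hf₂, Pi.sup_apply]
    ring_nf
  have himg₁ : f₁ '' Set.univ = Set.Ici (0:ℝ) := by
    ext y
    constructor
    · rintro ⟨u, -, rfl⟩; exact Set.mem_Ici.2 (le_max_right _ _)
    · intro hy
      exact ⟨y + 1, Set.mem_univ _, by
        simp only [hf₁]; rw [add_sub_cancel_right, max_eq_left (Set.mem_Ici.1 hy)]⟩
  have himg₂ : f₂ '' Set.univ = Set.Ici (0:ℝ) := by
    ext y
    constructor
    · rintro ⟨u, -, rfl⟩; exact Set.mem_Ici.2 (le_max_right _ _)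
    · intro hy
      refine ⟨-1 - y, Set.mem_univ _, ?_⟩
      simp only [hf₂]
      rw [show -1 - (-1 - y) = y by ring, max_eq_left (Set.mem_Ici.1 hy)]
  have hcomp₁ : ConvexOn ℝ Set.univ (g ∘ f₁) := by
    refine ConvexOn.comp ?_ hf₁conv ?_
    · rw [himg₁]; exact hgconv.subset (Set.subset_univ _) (convex_Ici 0)
    · rw [himg₁]; exact hgmono
  have hcomp₂ : ConvexOn ℝ Set.univ (h ∘ f₂) := by
    refine ConvexOn.comp ?_ hf₂conv ?_
    · rw [himg₂]; exact hhconv.subset (Set.subset_univ _) (convex_Ici 0)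
    · rw [himg₂]; exact hhmono
  have haff : ConvexOn ℝ Set.univ (fun u : ℝ => -u + 1 + Φ 0 / c) := by
    have := affine_convexOn_aux (-1) (1 + Φ 0 / c)
    refine this.congr ?_
    intro u _
    ring
  have htotal := (hcomp₁.add hcomp₂).add haff
  refine htotal.congr ?_
  intro u _
  simp only [Pi.add_apply, Function.comp_apply, hf₁, hf₂, hg, hh, barPhi, ← hc]
  rcases le_or_gt u 1 with hu1 | hu1
  · rcases lt_or_ge u (-1) with hu2 | hu2
    · rw [if_neg (by linarith), if_pos hu2,
        max_eq_right (by linarith : u - 1 ≤ 0), max_eq_left (by linarith : (0:ℝ) ≤ -1 - u)]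
      rw [neg_zero]
      ring
    · rw [if_neg (by linarith), if_neg (by linarith),
        max_eq_right (by linarith : u - 1 ≤ 0), max_eq_right (by linarith : -1 - u ≤ 0)]
      rw [neg_zero]
      ring
  · rw [if_pos hu1, max_eq_left (by linarith : (0:ℝ) ≤ u - 1),
      max_eq_right (by linarith : -1 - u ≤ 0), show -(u - 1) = 1 - u by ring]
    ring
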